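/- The homoskedastic variance estimator for the treatment coefficient in the stratified-experiment regression equals V̂ = n/(n-K-1) · Σ_k ω_[k] π_[k] { Λ̂_[k] + (τ̂_[k] - τ̂_OLS)²/n_[k] }, where Λ̂_[k] = s_[k]1²/n_[k]0 + s_[k]0²/n_[k]1, ω_[k] = π_[k]e_[k](1-e_[k])/Σ_{k'}π_[k']e_[k'](1-e_[k']), and V̂ = Σ_i ε̂_i² / {(n-K-1) Σ_i Z̃_i²}. -/

import Mathlib

open Matrix Finset

noncomputable section

variable {n K : ℕ}

/-- Units in stratum `k`. -/
def stratSet (stratum : Fin n → Fin K) (k : Fin K) : Finset (Fin n) :=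
  Finset.univ.filter (fun i => stratum i = k)

/-- Treated units in stratum `k`. -/
def treatSet (stratum : Fin n → Fin K) (Z : Fin n → Bool) (k : Fin K) : Finset (Fin n) :=
  (stratSet stratum k).filter (fun i => Z i)

/-- Control units in stratum `k`. -/
def ctrlSet (stratum : Fin n → Fin K) (Z : Fin n → Bool) (k : Fin K) : Finset (Fin n) :=
  (stratSet stratum k).filter (fun i => ¬ Z i)

/-- Stratum size `n_[k]`. -/
def nS (stratum : Fin n → Fin K) (k : Fin K) : ℕ := (stratSet stratum k).card

/-- Number of treated units `n_[k]1`. -/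
def n1 (stratum : Fin n → Fin K) (Z : Fin n → Bool) (k : Fin K) : ℕ :=
  (treatSet stratum Z k).card

/-- Number of control units `n_[k]0`. -/
def n0 (stratum : Fin n → Fin K) (Z : Fin n → Bool) (k : Fin K) : ℕ :=
  (ctrlSet stratum Z k).card

/-- Stratum proportion `π_[k] = n_[k]/n`. -/
def piS (stratum : Fin n → Fin K) (k : Fin K) : ℝ := (nS stratum k : ℝ) / n

/-- Propensity score `e_[k] = n_[k]1/n_[k]`. -/
def eS (stratum : Fin n → Fin K) (Z : Fin n → Bool) (k : Fin K) : ℝ :=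
  (n1 stratum Z k : ℝ) / (nS stratum k : ℝ)

/-- Treated mean `Ȳ_[k]1`. -/
def ybar1 (stratum : Fin n → Fin K) (Z : Fin n → Bool) (Y : Fin n → ℝ) (k : Fin K) : ℝ :=
  (∑ i ∈ treatSet stratum Z k, Y i) / (n1 stratum Z k : ℝ)

/-- Control mean `Ȳ_[k]0`. -/
def ybar0 (stratum : Fin n → Fin K) (Z : Fin n → Bool) (Y : Fin n → ℝ) (k : Fin K) : ℝ :=
  (∑ i ∈ ctrlSet stratum Z k, Y i) / (n0 stratum Z k : ℝ)

/-- Within-stratum difference in means `τ̂_[k]`. -/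
def tauK (stratum : Fin n → Fin K) (Z : Fin n → Bool) (Y : Fin n → ℝ) (k : Fin K) : ℝ :=
  ybar1 stratum Z Y k - ybar0 stratum Z Y k

/-- Weight `ω_[k] = π_[k]e_[k](1-e_[k]) / Σ_{k'} π_[k']e_[k'](1-e_[k'])`. -/
def wS (stratum : Fin n → Fin K) (Z : Fin n → Bool) (k : Fin K) : ℝ :=
  piS stratum k * eS stratum Z k * (1 - eS stratum Z k) /
    (∑ k', piS stratum k' * eS stratum Z k' * (1 - eS stratum Z k'))

/-- Weighted average `τ̂_OLS = Σ_k ω_[k] τ̂_[k]`. -/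
def tauOLS (stratum : Fin n → Fin K) (Z : Fin n → Bool) (Y : Fin n → ℝ) : ℝ :=
  ∑ k, wS stratum Z k * tauK stratum Z Y k

/-- Design matrix of the no-intercept regression of `Y` on `Z` and the stratum dummies. -/
def design (stratum : Fin n → Fin K) (Z : Fin n → Bool) :
    Matrix (Fin n) (Unit ⊕ Fin K) ℝ := fun i j =>
  match j with
  | Sum.inl _ => if Z i then 1 else 0
  | Sum.inr k => if stratum i = k then 1 else 0

/-- OLS coefficient vector from the regression of `Y` on `Z` and the stratum dummies. -/
def olsCoef (stratum : Fin n → Fin K) (Z : Fin n → Bool) (Y : Fin n → ℝ) :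
    (Unit ⊕ Fin K) → ℝ :=
  ((design stratum Z)ᵀ * design stratum Z)⁻¹ *ᵥ ((design stratum Z)ᵀ *ᵥ Y)

/-- OLS residual vector from the regression of `Y` on `Z` and the stratum dummies. -/
def olsResid (stratum : Fin n → Fin K) (Z : Fin n → Bool) (Y : Fin n → ℝ) (i : Fin n) : ℝ :=
  Y i - (design stratum Z *ᵥ olsCoef stratum Z Y) i

/-- Treated-group sample variance `s_[k]1²` (denominator `n_[k]1`). -/
def s1sq (stratum : Fin n → Fin K) (Z : Fin n → Bool) (Y : Fin n → ℝ) (k : Fin K) : ℝ :=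
  (∑ i ∈ treatSet stratum Z k, (Y i - ybar1 stratum Z Y k) ^ 2) / (n1 stratum Z k : ℝ)

/-- Control-group sample variance `s_[k]0²` (denominator `n_[k]0`). -/
def s0sq (stratum : Fin n → Fin K) (Z : Fin n → Bool) (Y : Fin n → ℝ) (k : Fin K) : ℝ :=
  (∑ i ∈ ctrlSet stratum Z k, (Y i - ybar0 stratum Z Y k) ^ 2) / (n0 stratum Z k : ℝ)

/-- Residual of `Z` from its regression on the stratum dummies: `Z̃_i = Z_i - e_[stratum i]`. -/
def zTilde (stratum : Fin n → Fin K) (Z : Fin n → Bool) (i : Fin n) : ℝ :=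
  (if Z i then 1 else 0) - eS stratum Z (stratum i)

end


section Aux
variable {n K : ℕ} (stratum : Fin n → Fin K) (Z : Fin n → Bool) (Y : Fin n → ℝ)

lemma sum_strat (f : Fin n → ℝ) : ∑ i, f i = ∑ k, ∑ i ∈ stratSet stratum k, f i := by
  rw [← Finset.sum_fiberwise univ stratum f]; rfl

lemma sum_split (k : Fin K) (f : Fin n → ℝ) :
    ∑ i ∈ stratSet stratum k, f i
      = ∑ i ∈ treatSet stratum Z k, f i + ∑ i ∈ ctrlSet stratum Z k, f i := by
  rw [treatSet, ctrlSet, Finset.sum_filter_add_sum_filter_not]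

lemma nS_eq (k : Fin K) : nS stratum k = n1 stratum Z k + n0 stratum Z k := by
  rw [nS, n1, n0, treatSet, ctrlSet, Finset.card_filter_add_card_filter_not]

/-- Explicit OLS coefficient vector. -/
noncomputable def betaVec (stratum : Fin n → Fin K) (Z : Fin n → Bool) (Y : Fin n → ℝ) :
    (Unit ⊕ Fin K) → ℝ := fun j =>
  match j with
  | Sum.inl _ => tauOLS stratum Z Y
  | Sum.inr k => ybar0 stratum Z Y k
      + eS stratum Z k * (tauK stratum Z Y k - tauOLS stratum Z Y)

lemma design_mulVec (v : (Unit ⊕ Fin K) → ℝ) (i : Fin n) :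
    (design stratum Z *ᵥ v) i
      = (if Z i then 1 else 0) * v (Sum.inl ()) + v (Sum.inr (stratum i)) := by
  rw [mulVec, dotProduct, Fintype.sum_sum_type]
  simp [design, Finset.sum_ite_eq]


lemma mem_treat {k : Fin K} {i : Fin n} (hi : i ∈ treatSet stratum Z k) :
    stratum i = k ∧ Z i = true := by
  simp only [treatSet, stratSet, Finset.mem_filter, Finset.mem_univ, true_and] at hi
  exact ⟨hi.1, hi.2⟩

lemma mem_ctrl {k : Fin K} {i : Fin n} (hi : i ∈ ctrlSet stratum Z k) :
    stratum i = k ∧ Z i = false := by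
  simp only [ctrlSet, stratSet, Finset.mem_filter, Finset.mem_univ, true_and] at hi
  exact ⟨hi.1, by simpa using hi.2⟩

lemma sum_treat_dev (k : Fin K) (hk : 0 < n1 stratum Z k) :
    ∑ i ∈ treatSet stratum Z k, (Y i - ybar1 stratum Z Y k) = 0 := by
  have hne : ((n1 stratum Z k : ℝ)) ≠ 0 := Nat.cast_ne_zero.2 hk.ne'
  rw [Finset.sum_sub_distrib, Finset.sum_const, nsmul_eq_mul, ybar1, ← n1]
  field_simp
  ring

lemma sum_ctrl_dev (k : Fin K) (hk : 0 < n0 stratum Z k) :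
    ∑ i ∈ ctrlSet stratum Z k, (Y i - ybar0 stratum Z Y k) = 0 := by
  have hne : ((n0 stratum Z k : ℝ)) ≠ 0 := Nat.cast_ne_zero.2 hk.ne'
  rw [Finset.sum_sub_distrib, Finset.sum_const, nsmul_eq_mul, ybar0, ← n0]
  field_simp
  ring

lemma e_mul (k : Fin K) (hk1 : 0 < n1 stratum Z k) (hk0 : 0 < n0 stratum Z k) :
    eS stratum Z k * (nS stratum k : ℝ) = (n1 stratum Z k : ℝ)
      ∧ (1 - eS stratum Z k) * (nS stratum k : ℝ) = (n0 stratum Z k : ℝ) := by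
  have hns : ((nS stratum k : ℝ)) ≠ 0 := by
    rw [nS_eq stratum Z k]
    push_cast
    have := hk1; have := hk0
    positivity
  constructor
  · rw [eS]; field_simp
  · rw [eS, nS_eq stratum Z k]; push_cast; field_simp; ring


lemma gram_isUnit (h1 : ∀ k, 0 < n1 stratum Z k) (h0 : ∀ k, 0 < n0 stratum Z k)
    (hn : 0 < n) : IsUnit ((design stratum Z)ᵀ * design stratum Z) := by
  rw [← Matrix.mulVec_injective_iff_isUnit]
  have key : ∀ v, ((design stratum Z)ᵀ * design stratum Z) *ᵥ v = 0 → v = 0 := by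
    intro v hv
    have hXv : design stratum Z *ᵥ v = 0 := by
      have hdot : (design stratum Z *ᵥ v) ⬝ᵥ (design stratum Z *ᵥ v) = 0 := by
        rw [Matrix.dotProduct_mulVec, ← Matrix.mulVec_transpose,
          Matrix.mulVec_mulVec, hv, zero_dotProduct]
      have hsum : ∑ i, (design stratum Z *ᵥ v) i ^ 2 = 0 := by
        rw [← hdot, dotProduct]; exact Finset.sum_congr rfl (fun i _ => sq ((design stratum Z *ᵥ v) i))
      funext i
      have := (Finset.sum_eq_zero_iff_of_nonneg
        (fun i _ => sq_nonneg ((design stratum Z *ᵥ v) i))).1 hsum i (Finset.mem_univ i)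
      exact pow_eq_zero_iff two_ne_zero |>.1 this
    have hinr : ∀ k, v (Sum.inr k) = 0 := by
      intro k
      obtain ⟨i, hi⟩ := Finset.card_pos.1 (h0 k)
      obtain ⟨hik, hzi⟩ := mem_ctrl stratum Z hi
      have := congrFun hXv i
      rw [design_mulVec, hzi, hik] at this
      simpa using this
    have hinl : v (Sum.inl ()) = 0 := by
      set i0 : Fin n := ⟨0, hn⟩
      obtain ⟨i, hi⟩ := Finset.card_pos.1 (h1 (stratum i0))
      obtain ⟨hik, hzi⟩ := mem_treat stratum Z hi
      have := congrFun hXv i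
      rw [design_mulVec, hzi, hik, hinr (stratum i0)] at this
      simpa using this
    funext j
    match j with
    | Sum.inl u => simpa using hinl
    | Sum.inr k => exact hinr k
  intro a b hab
  have : ((design stratum Z)ᵀ * design stratum Z) *ᵥ (a - b) = 0 := by
    rw [Matrix.mulVec_sub, hab, sub_self]
  exact sub_eq_zero.1 (key _ this)


lemma resid_treat {k : Fin K} {i : Fin n} (hi : i ∈ treatSet stratum Z k) :
    Y i - (design stratum Z *ᵥ betaVec stratum Z Y) i
      = (Y i - ybar1 stratum Z Y k)
        + (1 - eS stratum Z k) * (tauK stratum Z Y k - tauOLS stratum Z Y) := by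
  obtain ⟨hik, hzi⟩ := mem_treat stratum Z hi
  rw [design_mulVec, hzi, hik]
  simp only [betaVec, if_true, tauK]
  ring

lemma resid_ctrl {k : Fin K} {i : Fin n} (hi : i ∈ ctrlSet stratum Z k) :
    Y i - (design stratum Z *ᵥ betaVec stratum Z Y) i
      = (Y i - ybar0 stratum Z Y k)
        - eS stratum Z k * (tauK stratum Z Y k - tauOLS stratum Z Y) := by
  obtain ⟨hik, hzi⟩ := mem_ctrl stratum Z hi
  rw [design_mulVec, hzi, hik]
  simp only [betaVec, Bool.false_eq_true, if_false, tauK]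
  ring

lemma sum_treat_resid (k : Fin K) (hk : 0 < n1 stratum Z k) :
    ∑ i ∈ treatSet stratum Z k, (Y i - (design stratum Z *ᵥ betaVec stratum Z Y) i)
      = (n1 stratum Z k : ℝ) * ((1 - eS stratum Z k)
          * (tauK stratum Z Y k - tauOLS stratum Z Y)) := by
  rw [Finset.sum_congr rfl (fun i hi => resid_treat stratum Z Y hi),
    Finset.sum_add_distrib, sum_treat_dev stratum Z Y k hk, Finset.sum_const,
    nsmul_eq_mul, ← n1, zero_add]

lemma sum_ctrl_resid (k : Fin K) (hk : 0 < n0 stratum Z k) :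
    ∑ i ∈ ctrlSet stratum Z k, (Y i - (design stratum Z *ᵥ betaVec stratum Z Y) i)
      = -((n0 stratum Z k : ℝ) * (eS stratum Z k
          * (tauK stratum Z Y k - tauOLS stratum Z Y))) := by
  rw [Finset.sum_congr rfl (fun i hi => resid_ctrl stratum Z Y hi),
    Finset.sum_sub_distrib, sum_ctrl_dev stratum Z Y k hk, Finset.sum_const,
    nsmul_eq_mul, ← n0, zero_sub]

lemma Wpos (h1 : ∀ k, 0 < n1 stratum Z k) (h0 : ∀ k, 0 < n0 stratum Z k)
    (hn : 0 < n) (hK : 0 < K) :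
    0 < ∑ k, piS stratum k * eS stratum Z k * (1 - eS stratum Z k) := by
  apply Finset.sum_pos _ (Finset.univ_nonempty_iff.2 (Fin.pos_iff_nonempty.1 hK))
  intro k _
  have hnS : (0:ℝ) < (nS stratum k : ℝ) := by
    rw [nS_eq stratum Z k]; push_cast
    have := h1 k; have := h0 k
    positivity
  have h1k : (0:ℝ) < (n1 stratum Z k : ℝ) := by exact_mod_cast h1 k
  have h0k : (0:ℝ) < (n0 stratum Z k : ℝ) := by exact_mod_cast h0 k
  have he : 0 < eS stratum Z k := by rw [eS]; positivity
  have he1 : 0 < 1 - eS stratum Z k := by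
    have := (e_mul stratum Z k (h1 k) (h0 k)).2
    nlinarith
  have hpi : 0 < piS stratum k := by
    rw [piS]; have : (0:ℝ) < (n:ℝ) := by exact_mod_cast hn
    positivity
  positivity

lemma sum_inl_zero (h1 : ∀ k, 0 < n1 stratum Z k) (h0 : ∀ k, 0 < n0 stratum Z k)
    (hn : 0 < n) :
    ∑ k, (n1 stratum Z k : ℝ) * ((1 - eS stratum Z k)
      * (tauK stratum Z Y k - tauOLS stratum Z Y)) = 0 := by
  rcases Nat.eq_zero_or_pos K with hK | hK
  · subst hK; simp
  · set W := ∑ k', piS stratum k' * eS stratum Z k' * (1 - eS stratum Z k') with hWdef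
    have hW : 0 < W := Wpos stratum Z h1 h0 hn hK
    have hnR : (0:ℝ) < (n:ℝ) := by exact_mod_cast hn
    have hτ : tauOLS stratum Z Y
        = (∑ k, piS stratum k * eS stratum Z k * (1 - eS stratum Z k) * tauK stratum Z Y k)
          / W := by
      rw [tauOLS, Finset.sum_div]
      exact Finset.sum_congr rfl fun k _ => by rw [wS, div_mul_eq_mul_div]
    have hterm : ∀ k, (n1 stratum Z k : ℝ) * ((1 - eS stratum Z k)
        * (tauK stratum Z Y k - tauOLS stratum Z Y))
        = (n:ℝ) * (piS stratum k * eS stratum Z k * (1 - eS stratum Z k)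
            * (tauK stratum Z Y k - tauOLS stratum Z Y)) := by
      intro k
      have h1' := (e_mul stratum Z k (h1 k) (h0 k)).1
      have hpi : piS stratum k * (n:ℝ) = (nS stratum k : ℝ) := by
        rw [piS]; field_simp
      rw [← h1', ← hpi]; ring
    rw [Finset.sum_congr rfl (fun k _ => hterm k), ← Finset.mul_sum]
    have : ∑ k, piS stratum k * eS stratum Z k * (1 - eS stratum Z k)
            * (tauK stratum Z Y k - tauOLS stratum Z Y)
        = (∑ k, piS stratum k * eS stratum Z k * (1 - eS stratum Z k) * tauK stratum Z Y k)
          - tauOLS stratum Z Y * W := by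
      rw [hWdef, Finset.mul_sum, ← Finset.sum_sub_distrib]
      exact Finset.sum_congr rfl fun k _ => by ring
    rw [this, hτ]
    field_simp
    ring


lemma row_strat_zero (h1 : ∀ k, 0 < n1 stratum Z k) (h0 : ∀ k, 0 < n0 stratum Z k)
    (k : Fin K) :
    ∑ i ∈ stratSet stratum k, (Y i - (design stratum Z *ᵥ betaVec stratum Z Y) i) = 0 := by
  rw [sum_split stratum Z k, sum_treat_resid stratum Z Y k (h1 k),
    sum_ctrl_resid stratum Z Y k (h0 k)]
  have h1' := (e_mul stratum Z k (h1 k) (h0 k)).1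
  have h0' := (e_mul stratum Z k (h1 k) (h0 k)).2
  rw [← h1', ← h0']; ring

lemma olsCoef_eq (h1 : ∀ k, 0 < n1 stratum Z k) (h0 : ∀ k, 0 < n0 stratum Z k)
    (hn : 0 < n) : olsCoef stratum Z Y = betaVec stratum Z Y := by
  have hG := gram_isUnit stratum Z h1 h0 hn
  have hdet : IsUnit ((design stratum Z)ᵀ * design stratum Z).det :=
    (Matrix.isUnit_iff_isUnit_det _).1 hG
  have hnorm : ((design stratum Z)ᵀ * design stratum Z) *ᵥ betaVec stratum Z Y
      = (design stratum Z)ᵀ *ᵥ Y := by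
    rw [← Matrix.mulVec_mulVec]
    funext j
    show ∑ i, (design stratum Z)ᵀ j i * (design stratum Z *ᵥ betaVec stratum Z Y) i
        = ∑ i, (design stratum Z)ᵀ j i * Y i
    rw [← sub_eq_zero, ← Finset.sum_sub_distrib]
    have hre : ∀ i, (design stratum Z)ᵀ j i
          * (design stratum Z *ᵥ betaVec stratum Z Y) i
        - (design stratum Z)ᵀ j i * Y i
        = - (design stratum Z i j
            * (Y i - (design stratum Z *ᵥ betaVec stratum Z Y) i)) := fun i => by
      rw [Matrix.transpose_apply]; ring
    rw [Finset.sum_congr rfl (fun i _ => hre i), Finset.sum_neg_distrib, neg_eq_zero]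
    match j with
    | Sum.inl u =>
      rw [sum_strat stratum]
      rw [show (0:ℝ) = ∑ k, (n1 stratum Z k : ℝ) * ((1 - eS stratum Z k)
          * (tauK stratum Z Y k - tauOLS stratum Z Y))
        from (sum_inl_zero stratum Z Y h1 h0 hn).symm]
      refine Finset.sum_congr rfl fun k _ => ?_
      rw [sum_split stratum Z k, ← sum_treat_resid stratum Z Y k (h1 k)]
      have ht : ∑ i ∈ treatSet stratum Z k, design stratum Z i (Sum.inl u)
            * (Y i - (design stratum Z *ᵥ betaVec stratum Z Y) i)
          = ∑ i ∈ treatSet stratum Z k,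
            (Y i - (design stratum Z *ᵥ betaVec stratum Z Y) i) :=
        Finset.sum_congr rfl fun i hi => by
          rw [design, (mem_treat stratum Z hi).2]; simp
      have hc : ∑ i ∈ ctrlSet stratum Z k, design stratum Z i (Sum.inl u)
            * (Y i - (design stratum Z *ᵥ betaVec stratum Z Y) i) = 0 := by
        refine Finset.sum_eq_zero fun i hi => ?_
        rw [design, (mem_ctrl stratum Z hi).2]; simp
      rw [ht, hc, add_zero]
    | Sum.inr k =>
      have : ∑ i, design stratum Z i (Sum.inr k)
            * (Y i - (design stratum Z *ᵥ betaVec stratum Z Y) i)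
          = ∑ i ∈ stratSet stratum k,
            (Y i - (design stratum Z *ᵥ betaVec stratum Z Y) i) := by
        rw [stratSet, Finset.sum_filter]
        refine Finset.sum_congr rfl fun i _ => ?_
        rw [design]
        by_cases h : stratum i = k <;> simp [h]
      rw [this, row_strat_zero stratum Z Y h1 h0 k]
  rw [olsCoef, ← hnorm, Matrix.mulVec_mulVec, Matrix.nonsing_inv_mul _ hdet,
    Matrix.one_mulVec]


lemma rss_treat (k : Fin K) (hk : 0 < n1 stratum Z k) :
    ∑ i ∈ treatSet stratum Z k, (Y i - (design stratum Z *ᵥ betaVec stratum Z Y) i) ^ 2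
      = (n1 stratum Z k : ℝ) * s1sq stratum Z Y k
        + (n1 stratum Z k : ℝ) * (1 - eS stratum Z k) ^ 2
          * (tauK stratum Z Y k - tauOLS stratum Z Y) ^ 2 := by
  have hne : ((n1 stratum Z k : ℝ)) ≠ 0 := Nat.cast_ne_zero.2 hk.ne'
  have hexp : ∀ i ∈ treatSet stratum Z k,
      (Y i - (design stratum Z *ᵥ betaVec stratum Z Y) i) ^ 2
      = (Y i - ybar1 stratum Z Y k) ^ 2
        + (2 * ((1 - eS stratum Z k) * (tauK stratum Z Y k - tauOLS stratum Z Y)))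
            * (Y i - ybar1 stratum Z Y k)
        + ((1 - eS stratum Z k) * (tauK stratum Z Y k - tauOLS stratum Z Y)) ^ 2 := by
    intro i hi
    rw [resid_treat stratum Z Y hi]; ring
  rw [Finset.sum_congr rfl hexp, Finset.sum_add_distrib, Finset.sum_add_distrib,
    ← Finset.mul_sum, sum_treat_dev stratum Z Y k hk, Finset.sum_const, nsmul_eq_mul, ← n1,
    mul_zero, add_zero]
  rw [s1sq]
  field_simp

lemma rss_ctrl (k : Fin K) (hk : 0 < n0 stratum Z k) :
    ∑ i ∈ ctrlSet stratum Z k, (Y i - (design stratum Z *ᵥ betaVec stratum Z Y) i) ^ 2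
      = (n0 stratum Z k : ℝ) * s0sq stratum Z Y k
        + (n0 stratum Z k : ℝ) * (eS stratum Z k) ^ 2
          * (tauK stratum Z Y k - tauOLS stratum Z Y) ^ 2 := by
  have hne : ((n0 stratum Z k : ℝ)) ≠ 0 := Nat.cast_ne_zero.2 hk.ne'
  have hexp : ∀ i ∈ ctrlSet stratum Z k,
      (Y i - (design stratum Z *ᵥ betaVec stratum Z Y) i) ^ 2
      = (Y i - ybar0 stratum Z Y k) ^ 2
        + (-(2 * (eS stratum Z k * (tauK stratum Z Y k - tauOLS stratum Z Y))))
            * (Y i - ybar0 stratum Z Y k)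
        + (eS stratum Z k * (tauK stratum Z Y k - tauOLS stratum Z Y)) ^ 2 := by
    intro i hi
    rw [resid_ctrl stratum Z Y hi]; ring
  rw [Finset.sum_congr rfl hexp, Finset.sum_add_distrib, Finset.sum_add_distrib,
    ← Finset.mul_sum, sum_ctrl_dev stratum Z Y k hk, Finset.sum_const, nsmul_eq_mul, ← n0,
    mul_zero, add_zero]
  rw [s0sq]
  field_simp

lemma zt_sum :
    ∑ i, zTilde stratum Z i ^ 2
      = ∑ k, ((n1 stratum Z k : ℝ) * (1 - eS stratum Z k) ^ 2
          + (n0 stratum Z k : ℝ) * (eS stratum Z k) ^ 2) := by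
  rw [sum_strat stratum]
  refine Finset.sum_congr rfl fun k _ => ?_
  rw [sum_split stratum Z k]
  have ht : ∑ i ∈ treatSet stratum Z k, zTilde stratum Z i ^ 2
      = (n1 stratum Z k : ℝ) * (1 - eS stratum Z k) ^ 2 := by
    rw [show (n1 stratum Z k : ℝ) * (1 - eS stratum Z k) ^ 2
        = ∑ _i ∈ treatSet stratum Z k, (1 - eS stratum Z k) ^ 2 by
      rw [Finset.sum_const, nsmul_eq_mul, n1]]
    refine Finset.sum_congr rfl fun i hi => ?_
    obtain ⟨hik, hzi⟩ := mem_treat stratum Z hi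
    rw [zTilde, hzi, hik]; norm_num
  have hc : ∑ i ∈ ctrlSet stratum Z k, zTilde stratum Z i ^ 2
      = (n0 stratum Z k : ℝ) * (eS stratum Z k) ^ 2 := by
    rw [show (n0 stratum Z k : ℝ) * (eS stratum Z k) ^ 2
        = ∑ _i ∈ ctrlSet stratum Z k, (eS stratum Z k) ^ 2 by
      rw [Finset.sum_const, nsmul_eq_mul, n0]]
    refine Finset.sum_congr rfl fun i hi => ?_
    obtain ⟨hik, hzi⟩ := mem_ctrl stratum Z hi
    rw [zTilde, hzi, hik]; norm_num
  rw [ht, hc]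

end Aux

theorem stmt_16 {n K : ℕ} (stratum : Fin n → Fin K) (Z : Fin n → Bool) (Y : Fin n → ℝ)
    (h1 : ∀ k, 0 < n1 stratum Z k) (h0 : ∀ k, 0 < n0 stratum Z k) (hn : K + 1 < n)
    (VHat : ℝ)
    (hVHat : VHat = (∑ i, olsResid stratum Z Y i ^ 2)
      / (((n : ℝ) - K - 1) * ∑ i, zTilde stratum Z i ^ 2)) :
    VHat = (n : ℝ) / ((n : ℝ) - K - 1)
      * ∑ k, wS stratum Z k * piS stratum k
          * ((s1sq stratum Z Y k / (n0 stratum Z k : ℝ)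
              + s0sq stratum Z Y k / (n1 stratum Z k : ℝ))
            + (tauK stratum Z Y k - tauOLS stratum Z Y) ^ 2 / (nS stratum k : ℝ)) := by
  rcases Nat.eq_zero_or_pos K with hK0 | hK
  · subst hK0; exact (stratum ⟨0, by omega⟩).elim0
  have hn0 : 0 < n := by omega
  have hnR : (0:ℝ) < n := by exact_mod_cast hn0
  have hcpos : (0:ℝ) < (n:ℝ) - K - 1 := by
    have : ((K:ℝ) + 1) < n := by exact_mod_cast hn
    linarith
  set W := ∑ k', piS stratum k' * eS stratum Z k' * (1 - eS stratum Z k') with hWdef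
  have hW : 0 < W := Wpos stratum Z h1 h0 hn0 hK
  have hres : ∀ i, olsResid stratum Z Y i
      = Y i - (design stratum Z *ᵥ betaVec stratum Z Y) i := fun i => by
    rw [olsResid, olsCoef_eq stratum Z Y h1 h0 hn0]
  have hzt : ∑ i, zTilde stratum Z i ^ 2 = (n:ℝ) * W := by
    rw [zt_sum stratum Z, hWdef, Finset.mul_sum]
    refine Finset.sum_congr rfl fun k _ => ?_
    have h1' := (e_mul stratum Z k (h1 k) (h0 k)).1
    have h0' := (e_mul stratum Z k (h1 k) (h0 k)).2
    have hpi : piS stratum k * (n:ℝ) = (nS stratum k : ℝ) := by rw [piS]; field_simp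
    rw [← h1', ← h0', ← hpi]; ring
  have hrss : ∑ i, olsResid stratum Z Y i ^ 2
      = ∑ k, ((n1 stratum Z k : ℝ) * s1sq stratum Z Y k
          + (n1 stratum Z k : ℝ) * (1 - eS stratum Z k) ^ 2
            * (tauK stratum Z Y k - tauOLS stratum Z Y) ^ 2
          + ((n0 stratum Z k : ℝ) * s0sq stratum Z Y k
            + (n0 stratum Z k : ℝ) * (eS stratum Z k) ^ 2
              * (tauK stratum Z Y k - tauOLS stratum Z Y) ^ 2)) := by
    calc ∑ i, olsResid stratum Z Y i ^ 2
        = ∑ i, (Y i - (design stratum Z *ᵥ betaVec stratum Z Y) i) ^ 2 :=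
          Finset.sum_congr rfl fun i _ => by rw [hres]
      _ = ∑ k, ∑ i ∈ stratSet stratum k,
            (Y i - (design stratum Z *ᵥ betaVec stratum Z Y) i) ^ 2 := sum_strat stratum _
      _ = _ := Finset.sum_congr rfl fun k _ => by
          rw [sum_split stratum Z k, rss_treat stratum Z Y k (h1 k),
            rss_ctrl stratum Z Y k (h0 k)]
  have key : ∀ k, ((n1 stratum Z k : ℝ) * s1sq stratum Z Y k
          + (n1 stratum Z k : ℝ) * (1 - eS stratum Z k) ^ 2
            * (tauK stratum Z Y k - tauOLS stratum Z Y) ^ 2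
          + ((n0 stratum Z k : ℝ) * s0sq stratum Z Y k
            + (n0 stratum Z k : ℝ) * (eS stratum Z k) ^ 2
              * (tauK stratum Z Y k - tauOLS stratum Z Y) ^ 2))
        / (((n:ℝ) - K - 1) * ((n:ℝ) * W))
      = (n:ℝ) / ((n:ℝ) - K - 1) * (wS stratum Z k * piS stratum k
          * ((s1sq stratum Z Y k / (n0 stratum Z k : ℝ)
              + s0sq stratum Z Y k / (n1 stratum Z k : ℝ))
            + (tauK stratum Z Y k - tauOLS stratum Z Y) ^ 2 / (nS stratum k : ℝ))) := by
    intro k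
    have h1R : (0:ℝ) < (n1 stratum Z k : ℝ) := by exact_mod_cast h1 k
    have h0R : (0:ℝ) < (n0 stratum Z k : ℝ) := by exact_mod_cast h0 k
    have hNS : (nS stratum k : ℝ) = (n1 stratum Z k : ℝ) + (n0 stratum Z k : ℝ) := by
      rw [nS_eq stratum Z k]; push_cast; ring
    rw [wS, ← hWdef, piS, eS, hNS]
    have hNSpos : (0:ℝ) < (n1 stratum Z k : ℝ) + (n0 stratum Z k : ℝ) := by positivity
    field_simp
    ring
  rw [hVHat, hrss, hzt]
  calc (∑ k, ((n1 stratum Z k : ℝ) * s1sq stratum Z Y k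
          + (n1 stratum Z k : ℝ) * (1 - eS stratum Z k) ^ 2
            * (tauK stratum Z Y k - tauOLS stratum Z Y) ^ 2
          + ((n0 stratum Z k : ℝ) * s0sq stratum Z Y k
            + (n0 stratum Z k : ℝ) * (eS stratum Z k) ^ 2
              * (tauK stratum Z Y k - tauOLS stratum Z Y) ^ 2)))
        / (((n:ℝ) - K - 1) * ((n:ℝ) * W))
      = ∑ k, ((n1 stratum Z k : ℝ) * s1sq stratum Z Y k
          + (n1 stratum Z k : ℝ) * (1 - eS stratum Z k) ^ 2
            * (tauK stratum Z Y k - tauOLS stratum Z Y) ^ 2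
          + ((n0 stratum Z k : ℝ) * s0sq stratum Z Y k
            + (n0 stratum Z k : ℝ) * (eS stratum Z k) ^ 2
              * (tauK stratum Z Y k - tauOLS stratum Z Y) ^ 2))
        / (((n:ℝ) - K - 1) * ((n:ℝ) * W)) := Finset.sum_div _ _ _
    _ = ∑ k, (n:ℝ) / ((n:ℝ) - K - 1) * (wS stratum Z k * piS stratum k
          * ((s1sq stratum Z Y k / (n0 stratum Z k : ℝ)
              + s0sq stratum Z Y k / (n1 stratum Z k : ℝ))
            + (tauK stratum Z Y k - tauOLS stratum Z Y) ^ 2 / (nS stratum k : ℝ))) :=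
        Finset.sum_congr rfl fun k _ => key k
    _ = _ := (Finset.mul_sum _ _ _).symm
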